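/- Let p ≥ 1 and k ≥ p+1 be integers with k ≡ p+1 (mod 2). Then ∫_{ℝ} ∫_{0}^{∞} (x² + (y+1)²)^{−(k+p+1)/2} · (x² + (y−1)²)^{(k−p−1)/2} · y^{p−1} dy dx = π · 4^{−p} · Γ((k−p+1)/2) · Γ(p) / Γ((k+p+1)/2). -/

import Mathlib

open Real

open MeasureTheory Filter Topology Nat Set

lemma intA (n : ℕ) : Integrable (fun x : ℝ => ((1 + x ^ 2) ^ (n + 1))⁻¹) := by
  apply integrable_inv_one_add_sq.mono'
  · exact (Measurable.inv ((measurable_const.add (measurable_id.pow_const 2)).pow_const _)).aestronglyMeasurable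
  · filter_upwards with x
    have h1 : (0:ℝ) < 1 + x ^ 2 := by positivity
    rw [norm_inv, Real.norm_eq_abs, abs_of_pos (by positivity)]
    rw [inv_le_inv₀ (by positivity) h1]
    calc (1 + x^2) = (1 + x^2)^1 := (pow_one _).symm
    _ ≤ (1 + x^2)^(n+1) := pow_le_pow_right₀ (by nlinarith) (by omega)

set_option maxHeartbeats 1000000 in
lemma tendB (n : ℕ) : Tendsto (fun x : ℝ => x * ((1+x^2)^(n+1))⁻¹) atBot (𝓝 0) ∧
    Tendsto (fun x : ℝ => x * ((1+x^2)^(n+1))⁻¹) atTop (𝓝 0) := by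
  have hb : ∀ x : ℝ, 1 ≤ |x| → ‖x * ((1+x^2)^(n+1))⁻¹‖ ≤ |x|⁻¹ := by
    intro x hx
    have h1 : (0:ℝ) < (1 + x ^ 2)^(n+1) := by positivity
    have h0 : (0:ℝ) < |x| := by linarith
    rw [norm_mul, Real.norm_eq_abs, Real.norm_eq_abs,
      abs_of_pos (show (0:ℝ) < ((1+x^2)^(n+1))⁻¹ by positivity),
      ← div_eq_mul_inv, inv_eq_one_div, div_le_div_iff₀ h1 h0]
    calc |x| * |x| = x^2 := by rw [← abs_mul, ← sq, abs_of_nonneg (sq_nonneg x)]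
    _ ≤ 1 + x^2 := by linarith
    _ = (1+x^2)^1 := (pow_one _).symm
    _ ≤ (1+x^2)^(n+1) := pow_le_pow_right₀ (by nlinarith) (by omega)
    _ ≤ 1 * ((1+x^2)^(n+1)) := by rw [one_mul]
  have habs_bot : Tendsto (fun x : ℝ => |x|⁻¹) atBot (𝓝 0) :=
    (tendsto_abs_atBot_atTop).inv_tendsto_atTop
  have habs_top : Tendsto (fun x : ℝ => |x|⁻¹) atTop (𝓝 0) :=
    (tendsto_abs_atTop_atTop).inv_tendsto_atTop
  constructor
  · refine squeeze_zero_norm' ?_ habs_bot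
    filter_upwards [eventually_le_atBot (-1 : ℝ)] with x hx
    exact hb x (by rw [abs_of_nonpos (by linarith)]; linarith)
  · refine squeeze_zero_norm' ?_ habs_top
    filter_upwards [eventually_ge_atTop (1 : ℝ)] with x hx
    exact hb x (by rw [abs_of_nonneg (by linarith)]; linarith)

lemma intB (n : ℕ) : ∫ x : ℝ, ((1 + x ^ 2) ^ (n + 1))⁻¹
    = π * (2*n)! / (4 ^ n * ((n)! : ℝ) ^ 2) := by
  induction n with
  | zero => simpa using integral_univ_inv_one_add_sq
  | succ n ih =>
    have key : ∫ x : ℝ, ((-(2*(n:ℝ))-1) * ((1+x^2)^(n+1))⁻¹ + (2*n+2) * ((1+x^2)^(n+2))⁻¹) = 0 := by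
      have hderiv : ∀ x : ℝ, HasDerivAt (fun x : ℝ => x * ((1+x^2)^(n+1))⁻¹)
          ((-(2*(n:ℝ))-1) * ((1+x^2)^(n+1))⁻¹ + (2*n+2) * ((1+x^2)^(n+2))⁻¹) x := by
        intro x
        have h1 : (0:ℝ) < 1 + x ^ 2 := by positivity
        have h : HasDerivAt (fun x : ℝ => x * ((1+x^2)^(n+1))⁻¹)
            (1 * ((1+x^2)^(n+1))⁻¹ + x * (-( ((n:ℝ)+1) * (1+x^2)^n * (2*x)) / ((1+x^2)^(n+1))^2)) x := by
          have hb : HasDerivAt (fun x : ℝ => (1+x^2)^(n+1)) (((n:ℝ)+1) * (1+x^2)^n * (2*x)) x := by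
            have h2 : HasDerivAt (fun x : ℝ => 1 + x^2) (2*x) x := by
              simpa using ((hasDerivAt_pow 2 x).const_add 1)
            have := h2.pow (n+1)
            exact this.congr_deriv (by simp only [Nat.add_sub_cancel]; push_cast; ring)
          exact (hasDerivAt_id x).mul (hb.inv (by positivity))
        convert h using 1
        have h2 : ((1+x^2)^(n+1))^2 = (1+x^2)^(n+2) * (1+x^2)^n := by ring
        field_simp
        ring
      have hint : Integrable (fun x : ℝ => (-(2*(n:ℝ))-1) * ((1+x^2)^(n+1))⁻¹ + (2*n+2) * ((1+x^2)^(n+2))⁻¹) :=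
        ((intA n).const_mul _).add ((intA (n+1)).const_mul _)
      simpa using integral_of_hasDerivAt_of_tendsto hderiv hint (tendB n).1 (tendB n).2
    rw [integral_add ((intA n).const_mul _) ((intA (n+1)).const_mul _),
      integral_const_mul, integral_const_mul, ih] at key
    have h4 : (0:ℝ) < 4 ^ n * ((n)! : ℝ)^2 := by positivity
    have hsolve : ∫ x : ℝ, ((1+x^2)^(n+2))⁻¹
        = (2*(n:ℝ)+1)/(2*n+2) * (π * (2*n)! / (4 ^ n * ((n)! : ℝ)^2)) := by
      have h22 : (2*(n:ℝ)+2) ≠ 0 := by positivity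
      field_simp at key ⊢
      linarith [key]
    rw [show n+1+1 = n+2 from rfl, hsolve]
    have e1 : ((2*(n+1))! : ℝ) = (2*n+2) * (2*n+1) * (2*n)! := by
      push_cast [show 2*(n+1) = (2*n+1)+1 from by ring, Nat.factorial_succ]
      ring
    have e2 : (((n+1))! : ℝ) = (n+1) * (n)! := by push_cast [Nat.factorial_succ]; ring
    rw [e1, e2]
    have hf : ((n)! : ℝ) ≠ 0 := by positivity
    field_simp
    ring

lemma betaNat (m q : ℕ) : ∫ t in (0:ℝ)..1, t^m * (1-t)^q
    = ((m)! : ℝ) * (q)! / ((m+q+1)!) := by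
  induction q generalizing m with
  | zero =>
    have hm : ((m)! : ℝ) ≠ 0 := by positivity
    simp only [pow_zero, mul_one, integral_pow, one_pow, factorial_zero, cast_one]
    rw [show m + 0 + 1 = m + 1 from rfl, Nat.factorial_succ]
    push_cast
    rw [zero_pow (by omega : m+1 ≠ 0)]
    field_simp
    try ring
  | succ q ih =>
    have hderiv : ∀ t : ℝ, HasDerivAt (fun t : ℝ => t^(m+1)/(m+1) * (1-t)^(q+1))
        (t^m * (1-t)^(q+1) - ((q:ℝ)+1)/(m+1) * (t^(m+1) * (1-t)^q)) t := by
      intro t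
      have h1 : HasDerivAt (fun t : ℝ => t^(m+1)/(m+1)) (t^m) t := by
        have := (hasDerivAt_pow (m+1) t).div_const ((m:ℝ)+1)
        simpa [mul_div_assoc, mul_comm, mul_div_cancel_left₀, Nat.cast_add_one_ne_zero m] using this
      have h2 : HasDerivAt (fun t : ℝ => (1-t)^(q+1)) (-((q:ℝ)+1) * (1-t)^q) t := by
        have hs : HasDerivAt (fun t : ℝ => 1 - t) (-1) t := by
          simpa using (hasDerivAt_id t).const_sub 1
        have := hs.pow (q+1)
        refine this.congr_deriv ?_
        simp only [Nat.add_sub_cancel]; push_cast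
        ring
      have := h1.mul h2
      refine this.congr_deriv ?_
      have hm : ((m:ℝ)+1) ≠ 0 := Nat.cast_add_one_ne_zero m
      ring
      try ring
    have hzero : ∫ t in (0:ℝ)..1,
        (t^m * (1-t)^(q+1) - ((q:ℝ)+1)/(m+1) * (t^(m+1) * (1-t)^q)) = 0 := by
      rw [intervalIntegral.integral_eq_sub_of_hasDerivAt (fun t _ => hderiv t)]
      · norm_num
      · apply Continuous.intervalIntegrable; fun_prop
    rw [intervalIntegral.integral_sub (by apply Continuous.intervalIntegrable; fun_prop)
      (by apply Continuous.intervalIntegrable; fun_prop),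
      intervalIntegral.integral_const_mul, sub_eq_zero] at hzero
    rw [hzero, ih (m+1)]
    have e1 : (((q+1))! : ℝ) = (q+1) * (q)! := by push_cast [Nat.factorial_succ]; ring
    have e2 : (((m+1))! : ℝ) = (m+1) * (m)! := by push_cast [Nat.factorial_succ]; ring
    rw [show m+1+q+1 = m+(q+1)+1 from by ring, e1, e2]
    have hm : ((m:ℝ)+1) ≠ 0 := Nat.cast_add_one_ne_zero m
    have : ((m+(q+1)+1)! : ℝ) ≠ 0 := by positivity
    field_simp

lemma sumId (b p : ℕ) (hp : 1 ≤ p) :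
    ∑ i ∈ Finset.range (b+1), (-1:ℝ)^i * (b.choose i) / ((p:ℝ)+i)
    = ((p-1)! : ℝ) * (b)! / ((b+p)!) := by
  have key : ∀ i ∈ Finset.range (b+1),
      (-1:ℝ)^i * (b.choose i) / ((p:ℝ)+i)
      = ∫ t in (0:ℝ)..1, ((b.choose i : ℝ) * (-1)^i) * t^(p-1+i) := by
    intro i _
    rw [intervalIntegral.integral_const_mul, integral_pow]
    have : ((p-1+i : ℕ) : ℝ) + 1 = (p:ℝ) + i := by
      have : p - 1 + 1 = p := Nat.succ_pred_eq_of_pos hp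
      push_cast [Nat.cast_sub hp]
      ring
    rw [this]
    norm_num
    ring
  rw [Finset.sum_congr rfl key, ← intervalIntegral.integral_finset_sum
    (fun i _ => by apply Continuous.intervalIntegrable; fun_prop)]
  have : ∀ t : ℝ, ∑ i ∈ Finset.range (b+1), ((b.choose i : ℝ) * (-1)^i) * t^(p-1+i)
      = t^(p-1) * (1-t)^b := by
    intro t
    rw [show (1:ℝ) - t = -t + 1 from by ring, add_pow, Finset.mul_sum]
    apply Finset.sum_congr rfl
    intro i hi
    rw [neg_pow]
    ring
  rw [intervalIntegral.integral_congr (fun t _ => this t), betaNat,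
    show p - 1 + b + 1 = b + p from by omega]

lemma IoiBetaAux (m l : ℕ) (h : m + 2 ≤ l) :
    (∫ y in Ioi (0:ℝ), y^m * ((1+y)^l)⁻¹)
      = ∫ t in Ioo (0:ℝ) 1, t^m * (1-t)^(l-m-2) ∧
    IntegrableOn (fun y : ℝ => y^m * ((1+y)^l)⁻¹) (Ioi (0:ℝ)) := by
  set f : ℝ → ℝ := fun t => t / (1-t) with hf
  set f' : ℝ → ℝ := fun t => ((1-t)^2)⁻¹ with hf'
  have hderiv : ∀ t ∈ Ioo (0:ℝ) 1, HasDerivWithinAt f (f' t) (Ioo (0:ℝ) 1) t := by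
    intro t ht
    have h0 : (1:ℝ) - t ≠ 0 := by rcases ht with ⟨h1, h2⟩; intro hc; linarith [hc]
    have := (hasDerivAt_id t).div ((hasDerivAt_id t).const_sub 1) h0
    refine HasDerivAt.hasDerivWithinAt ?_
    refine this.congr_deriv ?_
    simp only [hf', id]; ring
    try ring
  have hinj : InjOn f (Ioo (0:ℝ) 1) := by
    intro t1 h1 t2 h2 he
    have h10 : (1:ℝ) - t1 ≠ 0 := by rcases h1 with ⟨a, b⟩; intro hc; linarith
    have h20 : (1:ℝ) - t2 ≠ 0 := by rcases h2 with ⟨a, b⟩; intro hc; linarith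
    simp only [hf] at he; field_simp at he
    linarith [he]
  have himg : f '' Ioo (0:ℝ) 1 = Ioi (0:ℝ) := by
    ext y
    constructor
    · rintro ⟨t, ⟨ht0, ht1⟩, rfl⟩
      exact div_pos ht0 (by linarith)
    · intro hy
      refine ⟨y / (1+y), ⟨div_pos hy (by linarith [mem_Ioi.mp hy]), ?_⟩, ?_⟩
      · rw [div_lt_one (by linarith [mem_Ioi.mp hy])]; linarith [mem_Ioi.mp hy]
      · have h1y : (1:ℝ) + y ≠ 0 := by have := mem_Ioi.mp hy; positivity
        rw [hf]
        field_simp; ring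
  have hcong : ∀ t ∈ Ioo (0:ℝ) 1,
      |f' t| • ((f t)^m * ((1 + f t)^l)⁻¹) = t^m * (1-t)^(l-m-2) := by
    intro t ⟨ht0, ht1⟩
    have h0 : (0:ℝ) < 1 - t := by linarith
    have e1 : 1 + f t = (1-t)⁻¹ := by rw [hf]; field_simp; ring
    rw [hf', e1, smul_eq_mul, abs_of_pos (by positivity), hf]
    rw [div_pow, inv_pow, inv_inv]
    obtain ⟨q, hq⟩ : ∃ q, l = q + m + 2 := ⟨l - m - 2, by omega⟩
    rw [hq, show q + m + 2 - m - 2 = q from by omega, pow_add, pow_add]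
    field_simp
  constructor
  · rw [← himg, integral_image_eq_integral_abs_deriv_smul measurableSet_Ioo hderiv hinj]
    exact setIntegral_congr_fun measurableSet_Ioo hcong
  · rw [← himg]
    rw [integrableOn_image_iff_integrableOn_abs_deriv_smul measurableSet_Ioo hderiv hinj]
    apply IntegrableOn.congr_fun ?_ (fun t ht => (hcong t ht).symm) measurableSet_Ioo
    exact ((continuous_pow m).mul
      ((continuous_const.sub continuous_id).pow _)).integrableOn_Icc.mono_set Ioo_subset_Icc_self

lemma IoiBeta (m l : ℕ) (h : m + 2 ≤ l) :
    ∫ y in Ioi (0:ℝ), y^m * ((1+y)^l)⁻¹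
      = ((m)! : ℝ) * ((l-m-2))! / ((l-1)!) := by
  rw [(IoiBetaAux m l h).1]
  rw [← MeasureTheory.integral_Ioc_eq_integral_Ioo, ← intervalIntegral.integral_of_le zero_le_one,
    betaNat, show m + (l-m-2) + 1 = l - 1 from by omega]

lemma keyc (n : ℕ) {c : ℝ} (hc : 0 < c) : ∀ x : ℝ,
    (c^(2*(n+1)))⁻¹ * ((1 + (c⁻¹*x) ^ 2) ^ (n + 1))⁻¹ = ((x^2 + c^2)^(n+1))⁻¹ := by
  intro x
  have h1 : (0:ℝ) < x^2 + c^2 := by positivity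
  have h2 : (1 + (c⁻¹*x)^2) = (x^2+c^2)/c^2 := by field_simp; ring
  rw [h2, div_pow, ← pow_mul, inv_div, div_eq_mul_inv, ← mul_assoc,
    inv_mul_cancel₀ (by positivity : (c:ℝ)^(2*(n+1)) ≠ 0), one_mul]

lemma intAc (n : ℕ) {c : ℝ} (hc : 0 < c) :
    Integrable (fun x : ℝ => ((x^2 + c^2)^(n+1))⁻¹) :=
  ((((intA n).comp_mul_left' (inv_ne_zero hc.ne')).const_mul _).congr
    (Filter.Eventually.of_forall fun x => keyc n hc x))

lemma intBc (n : ℕ) {c : ℝ} (hc : 0 < c) :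
    ∫ x : ℝ, ((x^2 + c^2)^(n+1))⁻¹
      = (c^(2*n+1))⁻¹ * (π * (2*n)! / (4 ^ n * ((n)! : ℝ) ^ 2)) := by
  rw [← integral_congr_ae (Filter.Eventually.of_forall fun x => keyc n hc x)]
  rw [integral_const_mul, MeasureTheory.Measure.integral_comp_mul_left
    (fun x : ℝ => ((1 + x ^ 2) ^ (n + 1))⁻¹) c⁻¹, intB n]
  rw [inv_inv, abs_of_pos hc, smul_eq_mul, ← mul_assoc]
  congr 1
  rw [show 2*(n+1) = (2*n+1)+1 from by ring, pow_succ]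
  field_simp
  try ring

lemma xint_pt (a b : ℕ) (hb : b < a) {A : ℝ} (hA : A ≠ 0) (B : ℝ) : ∀ x : ℝ,
    ((x^2 + A^2)^a)⁻¹ * (x^2 + B^2)^b
      = ∑ j ∈ Finset.range (b+1),
          (b.choose j : ℝ) * (B^2 - A^2)^(b-j) * ((x^2 + A^2)^(a-j))⁻¹ := by
  intro x
  have hx : (0:ℝ) < x^2 + A^2 := by positivity
  have hbin : (x^2 + B^2)^b
      = ∑ j ∈ Finset.range (b+1), (x^2+A^2)^j * (B^2-A^2)^(b-j) * (b.choose j : ℝ) := by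
    rw [← add_pow]
    congr 1
    ring
  rw [hbin, Finset.mul_sum]
  refine Finset.sum_congr rfl fun j hj => ?_
  have hj' : j ≤ b := by have := Finset.mem_range.mp hj; omega
  have hsplit : (x^2+A^2)^a = (x^2+A^2)^(a-j) * (x^2+A^2)^j := by
    rw [← pow_add]
    congr 1
    have := Finset.mem_range.mp hj
    omega
  rw [hsplit, mul_inv]
  field_simp
  try ring

lemma xint_integrable (a b : ℕ) (hb : b < a) {A : ℝ} (hA : 0 < A) (B : ℝ) :
    Integrable (fun x : ℝ => ((x^2 + A^2)^a)⁻¹ * (x^2 + B^2)^b) := by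
  rw [show (fun x : ℝ => ((x^2 + A^2)^a)⁻¹ * (x^2 + B^2)^b)
    = fun x : ℝ => ∑ j ∈ Finset.range (b+1),
      (b.choose j : ℝ) * (B^2 - A^2)^(b-j) * ((x^2 + A^2)^(a-j))⁻¹
    from funext (xint_pt a b hb hA.ne' B)]
  apply integrable_finset_sum
  intro j hj
  have hja : j < a := by have := Finset.mem_range.mp hj; omega
  have : a - j = (a - j - 1) + 1 := by omega
  rw [this]
  exact (intAc (a-j-1) hA).const_mul _

lemma xint (a b : ℕ) (hb : b < a) {A : ℝ} (hA : 0 < A) (B : ℝ) :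
    ∫ x : ℝ, ((x^2 + A^2)^a)⁻¹ * (x^2 + B^2)^b
      = ∑ j ∈ Finset.range (b+1), (b.choose j : ℝ) * (B^2 - A^2)^(b-j) *
          ((A^(2*(a-j-1)+1))⁻¹ * (π * (2*(a-j-1))! / (4 ^ (a-j-1) * (((a-j-1))! : ℝ) ^ 2))) := by
  rw [integral_congr_ae (Filter.Eventually.of_forall (xint_pt a b hb hA.ne' B))]
  rw [integral_finset_sum]
  · refine Finset.sum_congr rfl fun j hj => ?_
    have hja : j < a := by have := Finset.mem_range.mp hj; omega
    obtain ⟨n, hn⟩ : ∃ n, a - j = n + 1 := ⟨a-j-1, by omega⟩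
    rw [integral_const_mul, show a - j - 1 = n from by omega, hn, intBc n hA]
  · intro j hj
    have hja : j < a := by have := Finset.mem_range.mp hj; omega
    rw [show a - j = (a - j - 1) + 1 from by omega]
    exact (intAc (a-j-1) hA).const_mul _

theorem stmt9 (p k : ℕ) (hp : 1 ≤ p) (hk : p + 1 ≤ k) (hpar : k % 2 = (p + 1) % 2) :
    (∫ x : ℝ, ∫ y in Set.Ioi (0 : ℝ),
        (x ^ 2 + (y + 1) ^ 2) ^ (-(((k : ℝ) + p + 1) / 2)) *
          (x ^ 2 + (y - 1) ^ 2) ^ (((k : ℝ) - p - 1) / 2) * y ^ ((p : ℝ) - 1))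
      = Real.pi * (4 : ℝ) ^ (-(p : ℝ)) * Real.Gamma (((k : ℝ) - p + 1) / 2) *
          Real.Gamma p / Real.Gamma (((k : ℝ) + p + 1) / 2) := by
  obtain ⟨b, rfl⟩ : ∃ b, k = 2*b + p + 1 := ⟨(k-p-1)/2, by omega⟩
  set a : ℕ := b + p + 1 with ha
  have hba : b < a := by omega
  -- the coefficient constants
  set Cst : ℕ → ℝ := fun j =>
    (b.choose j : ℝ) * (-4)^(b-j) * (π * (2*(a-j-1))! / (4 ^ (a-j-1) * (((a-j-1))! : ℝ) ^ 2))
    with hCst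
  have hml : ∀ j, j ≤ b → (p-1)+(b-j) + 2 ≤ 2*(a-j-1)+1 := by intro j hj; omega
  -- value of the inner x integral for y > 0
  have hval : ∀ y : ℝ, y ∈ Ioi (0:ℝ) →
      (∫ x : ℝ, ((x^2+(y+1)^2)^a)⁻¹ * (x^2+(y-1)^2)^b * y^(p-1))
      = ∑ j ∈ Finset.range (b+1), Cst j * (y^((p-1)+(b-j)) * ((1+y)^(2*(a-j-1)+1))⁻¹) := by
    intro y hy
    have hy0 : (0:ℝ) < y := hy
    have hA : (0:ℝ) < y + 1 := by linarith
    rw [show (fun x : ℝ => ((x^2+(y+1)^2)^a)⁻¹ * (x^2+(y-1)^2)^b * y^(p-1))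
        = (fun x : ℝ => (((x^2+(y+1)^2)^a)⁻¹ * (x^2+(y-1)^2)^b) * y^(p-1)) from rfl,
      integral_mul_const, xint a b hba hA (y-1), Finset.sum_mul]
    refine Finset.sum_congr rfl fun j hj => ?_
    have hj' : j ≤ b := by have := Finset.mem_range.mp hj; omega
    rw [show (y-1)^2-(y+1)^2 = -4*y from by ring, mul_pow, hCst]
    rw [show y + 1 = 1 + y from by ring, pow_add]
    ring
  -- integrability of the summed y-integrand
  have hG : Integrable (fun y : ℝ => ∑ j ∈ Finset.range (b+1),
      Cst j * (y^((p-1)+(b-j)) * ((1+y)^(2*(a-j-1)+1))⁻¹)) (volume.restrict (Ioi 0)) := by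
    apply integrable_finset_sum
    intro j hj
    have hj' : j ≤ b := by have := Finset.mem_range.mp hj; omega
    exact ((IoiBetaAux _ _ (hml j hj')).2).const_mul _
  -- measurability on the product
  have hmes : AEStronglyMeasurable
      (fun z : ℝ×ℝ => ((z.1^2+(z.2+1)^2)^a)⁻¹ * (z.1^2+(z.2-1)^2)^b * z.2^(p-1))
      (volume.prod (volume.restrict (Ioi 0))) := by
    apply Measurable.aestronglyMeasurable
    have m1 : Measurable fun z : ℝ×ℝ => z.1^2+(z.2+1)^2 :=
      ((measurable_fst.pow_const 2).add ((measurable_snd.add_const 1).pow_const 2))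
    have m2 : Measurable fun z : ℝ×ℝ => z.1^2+(z.2-1)^2 :=
      ((measurable_fst.pow_const 2).add ((measurable_snd.sub_const 1).pow_const 2))
    exact (((m1.pow_const a).inv.mul (m2.pow_const b)).mul (measurable_snd.pow_const (p-1)))
  -- integrability on the product
  have hint : Integrable
      (fun z : ℝ×ℝ => ((z.1^2+(z.2+1)^2)^a)⁻¹ * (z.1^2+(z.2-1)^2)^b * z.2^(p-1))
      (volume.prod (volume.restrict (Ioi 0))) := by
    rw [integrable_prod_iff' hmes]
    constructor
    · filter_upwards [ae_restrict_mem measurableSet_Ioi] with y hy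
      have hy0 : (0:ℝ) < y := hy
      exact (xint_integrable a b hba (show (0:ℝ) < y+1 by linarith) (y-1)).mul_const _
    · apply hG.congr
      filter_upwards [ae_restrict_mem measurableSet_Ioi] with y hy
      have hy0 : (0:ℝ) < y := hy
      calc (∑ j ∈ Finset.range (b+1), Cst j * (y^((p-1)+(b-j)) * ((1+y)^(2*(a-j-1)+1))⁻¹))
          = ∫ x : ℝ, ((x^2+(y+1)^2)^a)⁻¹ * (x^2+(y-1)^2)^b * y^(p-1) := (hval y hy).symm
        _ = ∫ x : ℝ, ‖((x^2+(y+1)^2)^a)⁻¹ * (x^2+(y-1)^2)^b * y^(p-1)‖ :=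
          integral_congr_ae (Eventually.of_forall fun x =>
            (Real.norm_of_nonneg (by positivity)).symm)
  -- cast identities
  have h1 : (((2*b+p+1 : ℕ):ℝ) + p + 1)/2 = ((a:ℕ):ℝ) := by rw [ha]; push_cast; ring
  have h2 : (((2*b+p+1 : ℕ):ℝ) - p - 1)/2 = ((b:ℕ):ℝ) := by push_cast; ring
  have h3 : ((p:ℕ):ℝ) - 1 = ((p-1 : ℕ):ℝ) := by
    have : ((p:ℕ):ℝ) = ((p-1:ℕ):ℝ) + 1 := by
      rw [← Nat.cast_add_one]; congr 1; omega
    rw [this]; ring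
  -- rewrite the LHS into pow form
  have step1 : (∫ x : ℝ, ∫ y in Set.Ioi (0 : ℝ),
        (x ^ 2 + (y + 1) ^ 2) ^ (-((((2*b+p+1:ℕ) : ℝ) + p + 1) / 2)) *
          (x ^ 2 + (y - 1) ^ 2) ^ ((((2*b+p+1:ℕ) : ℝ) - p - 1) / 2) * y ^ ((p : ℝ) - 1))
      = ∫ x : ℝ, ∫ y in Ioi (0:ℝ), ((x^2+(y+1)^2)^a)⁻¹ * (x^2+(y-1)^2)^b * y^(p-1) := by
    refine integral_congr_ae (Eventually.of_forall fun x => ?_)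
    refine setIntegral_congr_fun measurableSet_Ioi fun y hy => ?_
    have hy0 : (0:ℝ) < y := hy
    have hpos : (0:ℝ) < x^2+(y+1)^2 := by positivity
    rw [h1, h2, h3, Real.rpow_neg hpos.le, Real.rpow_natCast, Real.rpow_natCast,
      Real.rpow_natCast]
  rw [step1]
  rw [MeasureTheory.integral_integral_swap hint]
  rw [setIntegral_congr_fun measurableSet_Ioi hval]
  rw [integral_finset_sum _ (fun j hj =>
    ((IoiBetaAux _ _ (hml j (by have := Finset.mem_range.mp hj; omega))).2).const_mul _)]
  -- evaluate each beta integral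
  have hstep2 : ∀ j ∈ Finset.range (b+1),
      ∫ y in Ioi (0:ℝ), Cst j * (y^((p-1)+(b-j)) * ((1+y)^(2*(a-j-1)+1))⁻¹)
      = π * ((4:ℝ)^p)⁻¹ * ((-1:ℝ)^(b-j) * (b.choose (b-j) : ℝ) / ((p:ℝ) + ((b-j:ℕ):ℝ))) := by
    intro j hj
    have hj' : j ≤ b := by have := Finset.mem_range.mp hj; omega
    rw [integral_const_mul, IoiBeta _ _ (hml j hj')]
    obtain ⟨i, hi⟩ : ∃ i, b = j + i := ⟨b - j, by omega⟩
    subst hi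
    simp only [hCst]
    rw [show j + i - j = i from by omega]
    rw [show a - j - 1 = p + i from by omega]
    rw [show 2*(p+i)+1-((p-1)+i)-2 = p + i from by omega]
    rw [show 2*(p+i)+1-1 = 2*(p+i) from by omega]
    have hchs : (j+i).choose i = (j+i).choose j := by
      have h := Nat.choose_symm (show j ≤ j+i by omega)
      rwa [show j+i-j = i from by omega] at h
    rw [hchs]
    have hfact : ((p+i)! : ℕ) = (p+i) * ((p-1)+i)! := by
      rw [show p+i = (p-1)+i+1 from by omega, Nat.factorial_succ]
    have hne1 : (((2*(p+i))! : ℕ) : ℝ) ≠ 0 := by positivity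
    have hne2 : ((((p-1)+i)! : ℕ) : ℝ) ≠ 0 := by positivity
    have hne3 : ((p:ℝ) + (i:ℕ)) ≠ 0 := by positivity
    have h4i : ((4:ℝ))^(p+i) = 4^p * 4^i := pow_add 4 p i
    have hneg : ((-4:ℝ))^i = (-1)^i * 4^i := by rw [show (-4:ℝ) = (-1) * 4 from by norm_num, mul_pow]
    rw [hneg, h4i]
    rw [show (((p+i)! : ℕ) : ℝ) = ((p:ℝ)+(i:ℕ)) * ((((p-1)+i)! : ℕ) : ℝ) from by
      rw [hfact]; push_cast; ring]
    field_simp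
  rw [Finset.sum_congr rfl hstep2, ← Finset.mul_sum]
  have hrefl : ∑ j ∈ Finset.range (b+1),
      ((-1:ℝ)^(b-j) * (b.choose (b-j) : ℝ) / ((p:ℝ) + ((b-j:ℕ):ℝ)))
      = ((p-1)! : ℝ) * (b)! / ((b+p)!) := by
    rw [← sumId b p hp, ← Finset.sum_range_reflect
      (fun i => (-1:ℝ)^i * (b.choose i : ℝ) / ((p:ℝ) + ((i:ℕ):ℝ))) (b+1)]
    simp only [Nat.add_sub_cancel]
  rw [hrefl]
  -- right-hand side
  have r1 : (((2*b+p+1:ℕ):ℝ) - p + 1)/2 = ((b:ℕ):ℝ) + 1 := by push_cast; ring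
  have r2 : (((2*b+p+1:ℕ):ℝ) + p + 1)/2 = ((b+p:ℕ):ℝ) + 1 := by push_cast; ring
  have r3 : ((p:ℕ):ℝ) = ((p-1:ℕ):ℝ) + 1 := by
    rw [← Nat.cast_add_one]; congr 1; omega
  rw [Real.rpow_neg (by norm_num : (0:ℝ) ≤ 4), Real.rpow_natCast]
  rw [r1, r2, r3, Real.Gamma_nat_eq_factorial, Real.Gamma_nat_eq_factorial,
    Real.Gamma_nat_eq_factorial]
  have hne : (((b+p)! : ℕ) : ℝ) ≠ 0 := by positivity
  have hne4 : ((4:ℝ)^p) ≠ 0 := by positivity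
  field_simp
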